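/- Let m1, m2, α > 0 and N1^a, N1^A, N2^a, N2^A > 0. Then the 3×3 real matrix J_{S_L} (defined in the context) has strictly negative determinant; consequently, for every b ∈ ℝ³ the linear system J_{S_L} x = b has a unique solution x ∈ ℝ³. -/

import Mathlib

lemma det_neg_aux (A B C D p1 p2 q1 q2 : ℝ) (hA : 0 < A) (hB : 0 < B) (hC : 0 < C) (hD : 0 < D)
    (hp1 : 0 < p1) (hp2 : 0 < p2) (hq1 : 0 < q1) (hq2 : 0 < q2)
    (e1 : p1 + q1 = 1) (e2 : p2 + q2 = 1) :
    (!![-(1/2 : ℝ), (1/2) * (A - B), -(1/2) * (C - D);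
        (q1 - q2) / 2, -(A + B) - (q1 + q2) / 4, (q1 + q2) / 4;
        (p2 - p1) / 2, (p1 + p2) / 4, -(C + D) - (p1 + p2) / 4] :
      Matrix (Fin 3) (Fin 3) ℝ).det < 0 := by
  have hq1' : q1 = 1 - p1 := by linarith
  have hq2' : q2 = 1 - p2 := by linarith
  have hp1' : p1 < 1 := by linarith
  have hp2' : p2 < 1 := by linarith
  simp [Matrix.det_fin_three]
  subst hq1' hq2'
  nlinarith [mul_pos hA hC, mul_pos hB hD,
    mul_pos (mul_pos hA hD) (show (0:ℝ) < p1 + 1 - p2 by linarith),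
    mul_pos (mul_pos hB hC) (show (0:ℝ) < p2 + 1 - p1 by linarith),
    mul_pos hp1 hA, mul_pos hp2 hB,
    mul_pos (show (0:ℝ) < 1 - p1 by linarith) hC,
    mul_pos (show (0:ℝ) < 1 - p2 by linarith) hD]

theorem stmt_10 (m1 m2 a N1a N1A N2a N2A : ℝ)
    (hm1 : 0 < m1) (hm2 : 0 < m2) (ha : 0 < a)
    (h1 : 0 < N1a) (h2 : 0 < N1A) (h3 : 0 < N2a) (h4 : 0 < N2A) :
    let p1 := N1A / (N1A + N1a); let q1 := N1a / (N1A + N1a)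
    let p2 := N2A / (N2A + N2a); let q2 := N2a / (N2A + N2a)
    let JSL : Matrix (Fin 3) (Fin 3) ℝ :=
      !![-(1/2 : ℝ),
         (1/2) * (a * m2 * N2A / N1A - m1 * N1A / (a * N2A)),
         -(1/2) * (a * m2 * N2a / N1a - m1 * N1a / (a * N2a));
         (q1 - q2) / 2,
         -(a * m2 * N2A / N1A + m1 * N1A / (a * N2A)) - (q1 + q2) / 4,
         (q1 + q2) / 4;
         (p2 - p1) / 2,
         (p1 + p2) / 4,
         -(a * m2 * N2a / N1a + m1 * N1a / (a * N2a)) - (p1 + p2) / 4]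
    JSL.det < 0 ∧ ∀ b : Fin 3 → ℝ, ∃! x : Fin 3 → ℝ, JSL.mulVec x = b := by
  intro p1 q1 p2 q2 JSL
  have hs1 : 0 < N1A + N1a := by linarith
  have hs2 : 0 < N2A + N2a := by linarith
  have hdet : JSL.det < 0 := by
    apply det_neg_aux
    · positivity
    · positivity
    · positivity
    · positivity
    · exact div_pos h2 hs1
    · exact div_pos h4 hs2
    · exact div_pos h1 hs1
    · exact div_pos h3 hs2
    · show N1A / (N1A + N1a) + N1a / (N1A + N1a) = 1
      rw [← add_div, div_self hs1.ne']
    · show N2A / (N2A + N2a) + N2a / (N2A + N2a) = 1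
      rw [← add_div, div_self hs2.ne']
  refine ⟨hdet, fun b => ?_⟩
  have hd : JSL.det ≠ 0 := ne_of_lt hdet
  have hinv : JSL * JSL⁻¹ = 1 := Matrix.mul_nonsing_inv JSL (isUnit_iff_ne_zero.2 hd)
  have hinv' : JSL⁻¹ * JSL = 1 := Matrix.nonsing_inv_mul JSL (isUnit_iff_ne_zero.2 hd)
  refine ⟨JSL⁻¹.mulVec b, ?_, fun x hx => ?_⟩
  · show JSL.mulVec (JSL⁻¹.mulVec b) = b
    rw [Matrix.mulVec_mulVec, hinv, Matrix.one_mulVec]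
  · calc x = (JSL⁻¹ * JSL).mulVec x := by rw [hinv', Matrix.one_mulVec]
      _ = JSL⁻¹.mulVec b := by rw [← Matrix.mulVec_mulVec, hx]
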